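/- Let P_t(x) = (1/(2πt)) exp(−|x|²/(2t)). For all T₀ ∈ (0,∞), p ∈ ℝ_{≥0}, p' ∈ ℝ_{≥0}, and y ∈ ℝ²: ∫_{ℝ²} |x'|^{p'} P_{T₀}(x') / (1 + |y − x'|^p) dx' ≤ C(p,p') (T₀^{p'/2} + T₀^{(p'+p)/2}) / (1 + |y|^p). -/

import Mathlib

open MeasureTheory

/-- The two-dimensional heat kernel `P_t(x) = (2πt)⁻¹ exp(−‖x‖²/(2t))`. -/
noncomputable def heatK (t : ℝ) (x : EuclideanSpace ℝ (Fin 2)) : ℝ :=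
  (2 * Real.pi * t)⁻¹ * Real.exp (-‖x‖ ^ 2 / (2 * t))

lemma aux_rpow_le_exp (b : ℝ) (hb : 0 ≤ b) {u : ℝ} (hu : 0 ≤ u) :
    u ^ b ≤ Nat.factorial (Nat.ceil b) * Real.exp u := by
  set n := Nat.ceil b with hn
  have h1 : (1:ℝ) ≤ Nat.factorial n := by exact_mod_cast Nat.one_le_iff_ne_zero.2 (Nat.factorial_ne_zero n)
  rcases le_or_gt u 1 with h | h
  · calc u ^ b ≤ 1 := Real.rpow_le_one hu h hb
      _ ≤ Nat.factorial n * Real.exp u := by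
        nlinarith [Real.one_le_exp hu]
  · have h1u : (1:ℝ) ≤ u := h.le
    have hbn : b ≤ (n : ℝ) := Nat.le_ceil b
    have step1 : u ^ b ≤ u ^ (n : ℝ) := Real.rpow_le_rpow_of_exponent_le h1u hbn
    have step2 : u ^ (n : ℝ) = u ^ n := Real.rpow_natCast u n
    have step3 : u ^ n ≤ Nat.factorial n * Real.exp u := by
      have hsum : u ^ n / Nat.factorial n ≤ Real.exp u := by
        calc u ^ n / Nat.factorial n = ∑ i ∈ {n}, u ^ i / Nat.factorial i := by simp
          _ ≤ ∑ i ∈ Finset.range (n+1), u ^ i / Nat.factorial i := by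
              apply Finset.sum_le_sum_of_subset_of_nonneg
              · intro i hi; simp at hi; simp [hi, Nat.lt_succ_self]
              · intro i _ _; positivity
          _ ≤ Real.exp u := Real.sum_le_exp_of_nonneg (by linarith) _
      calc u ^ n = Nat.factorial n * (u ^ n / Nat.factorial n) := by field_simp
        _ ≤ Nat.factorial n * Real.exp u := by
            apply mul_le_mul_of_nonneg_left hsum (by positivity)
    calc u ^ b ≤ u ^ (n:ℝ) := step1
      _ = u ^ n := step2
      _ ≤ Nat.factorial n * Real.exp u := step3

lemma aux_moment (q T : ℝ) (hq : 0 ≤ q) (hT : 0 < T) (x : EuclideanSpace ℝ (Fin 2)) :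
    ‖x‖ ^ q * Real.exp (-‖x‖ ^ 2 / (2 * T)) ≤
      (8:ℝ) ^ (q/2) * Nat.factorial (Nat.ceil (q/2)) * T ^ (q/2) * Real.exp (-(‖x‖ ^ 2) / (4 * T)) := by
  set r := ‖x‖ with hr
  have hr0 : 0 ≤ r := norm_nonneg x
  set u := r ^ 2 / (8 * T) with hu
  have hu0 : 0 ≤ u := by positivity
  have hru : r ^ 2 = 8 * T * u := by rw [hu]; field_simp
  have h1 : r ^ q = (8 * T * u) ^ (q/2 : ℝ) := by
    rw [← hru]
    rw [show ((r:ℝ) ^ 2 : ℝ) = r ^ (2:ℝ) by rw [Real.rpow_two], ← Real.rpow_mul hr0]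
    congr 1; ring
  have h2 : (8 * T * u) ^ (q/2 : ℝ) = (8:ℝ) ^ (q/2) * T ^ (q/2) * u ^ (q/2) := by
    rw [Real.mul_rpow (by positivity) hu0, Real.mul_rpow (by norm_num) hT.le]
  have h3 : u ^ (q/2 : ℝ) ≤ Nat.factorial (Nat.ceil (q/2)) * Real.exp u :=
    aux_rpow_le_exp (q/2) (by linarith) hu0
  have h4 : Real.exp u * Real.exp (-r ^ 2 / (2 * T)) ≤ Real.exp (-(r ^ 2) / (4 * T)) := by
    rw [← Real.exp_add]
    apply Real.exp_le_exp.2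
    rw [hu]
    rw [div_add_div _ _ (by positivity : (8*T:ℝ) ≠ 0) (by positivity : (2*T:ℝ) ≠ 0)]
    rw [div_le_div_iff₀ (by positivity) (by positivity)]
    nlinarith [sq_nonneg r, hT, mul_pos hT hT]
  calc r ^ q * Real.exp (-r ^ 2 / (2 * T))
      = (8:ℝ) ^ (q/2) * T ^ (q/2) * (u ^ (q/2:ℝ) * Real.exp (-r ^ 2 / (2 * T))) := by
        rw [h1, h2]; ring
    _ ≤ (8:ℝ) ^ (q/2) * T ^ (q/2) * ((Nat.factorial (Nat.ceil (q/2)) * Real.exp u) * Real.exp (-r ^ 2 / (2 * T))) := by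
        apply mul_le_mul_of_nonneg_left _ (by positivity)
        exact mul_le_mul_of_nonneg_right h3 (Real.exp_pos _).le
    _ = (8:ℝ) ^ (q/2) * Nat.factorial (Nat.ceil (q/2)) * T ^ (q/2) * (Real.exp u * Real.exp (-r ^ 2 / (2 * T))) := by
        ring
    _ ≤ (8:ℝ) ^ (q/2) * Nat.factorial (Nat.ceil (q/2)) * T ^ (q/2) * Real.exp (-(r ^ 2) / (4 * T)) := by
        apply mul_le_mul_of_nonneg_left h4 (by positivity)

lemma aux_weight (p : ℝ) (hp : 0 ≤ p) (y x : EuclideanSpace ℝ (Fin 2)) :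
    1 + ‖y‖ ^ p ≤ (2:ℝ) ^ p * (1 + ‖y - x‖ ^ p) * (1 + ‖x‖ ^ p) := by
  set a := ‖y - x‖ with ha
  set b := ‖x‖ with hb
  have ha0 : 0 ≤ a := norm_nonneg _
  have hb0 : 0 ≤ b := norm_nonneg _
  have htri : ‖y‖ ≤ a + b := by
    calc ‖y‖ = ‖(y - x) + x‖ := by rw [sub_add_cancel]
      _ ≤ a + b := norm_add_le _ _
  have hmax : a + b ≤ 2 * max a b := by
    rcases le_total a b with h | h <;> simp [max_eq_right, max_eq_left, h] <;> linarith
  have key : ‖y‖ ^ p ≤ (2:ℝ) ^ p * (a ^ p + b ^ p) := by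
    calc ‖y‖ ^ p ≤ (2 * max a b) ^ p :=
          Real.rpow_le_rpow (norm_nonneg y) (le_trans htri hmax) hp
      _ = (2:ℝ) ^ p * (max a b) ^ p := Real.mul_rpow (by norm_num) (le_max_of_le_left ha0)
      _ ≤ (2:ℝ) ^ p * (a ^ p + b ^ p) := by
          apply mul_le_mul_of_nonneg_left _ (by positivity)
          rcases le_total a b with h | h
          · rw [max_eq_right h]
            have : 0 ≤ a ^ p := Real.rpow_nonneg ha0 p
            linarith
          · rw [max_eq_left h]
            have : 0 ≤ b ^ p := Real.rpow_nonneg hb0 p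
            linarith
  have h2p : (1:ℝ) ≤ (2:ℝ) ^ p := Real.one_le_rpow (by norm_num) hp
  have hap : 0 ≤ a ^ p := Real.rpow_nonneg ha0 p
  have hbp : 0 ≤ b ^ p := Real.rpow_nonneg hb0 p
  nlinarith [mul_nonneg hap hbp, mul_le_mul_of_nonneg_left (mul_nonneg hap hbp) (le_trans zero_le_one h2p)]

lemma aux_integrable_gauss {b : ℝ} (hb : 0 < b) :
    Integrable (fun x : EuclideanSpace ℝ (Fin 2) => Real.exp (-b * ‖x‖ ^ 2)) := by
  have h := GaussianFourier.integrable_cexp_neg_mul_sq_norm_add (V := EuclideanSpace ℝ (Fin 2))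
      (b := (b : ℂ)) (by simpa using hb) 0 0
  have h2 := h.norm
  simpa [Complex.norm_exp, ← Complex.ofReal_pow, ← Complex.ofReal_mul, ← Complex.ofReal_neg] using h2

lemma aux_integral_gauss {T : ℝ} (hT : 0 < T) :
    ∫ x : EuclideanSpace ℝ (Fin 2), Real.exp (-(1/(4*T)) * ‖x‖ ^ 2)
      = 4 * Real.pi * T := by
  rw [GaussianFourier.integral_rexp_neg_mul_sq_norm (by positivity)]
  have : Module.finrank ℝ (EuclideanSpace ℝ (Fin 2)) = 2 := by simp
  rw [this]
  norm_num
  have hT' : T ≠ 0 := hT.ne'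
  field_simp

theorem stmt_8 (p p' : ℝ) (hp : 0 ≤ p) (hp' : 0 ≤ p') :
    ∃ C : ℝ, 0 < C ∧ ∀ T₀ : ℝ, 0 < T₀ → ∀ y : EuclideanSpace ℝ (Fin 2),
      (∫ x' : EuclideanSpace ℝ (Fin 2),
          ‖x'‖ ^ p' * heatK T₀ x' / (1 + ‖y - x'‖ ^ p))
        ≤ C * (T₀ ^ (p'/2) + T₀ ^ ((p' + p)/2)) / (1 + ‖y‖ ^ p) := by
  set K₁ : ℝ := (8:ℝ) ^ (p'/2) * Nat.factorial (Nat.ceil (p'/2)) with hK₁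
  set K₂ : ℝ := (8:ℝ) ^ ((p'+p)/2) * Nat.factorial (Nat.ceil ((p'+p)/2)) with hK₂
  have hK₁0 : 0 < K₁ := by positivity
  have hK₂0 : 0 < K₂ := by positivity
  set K : ℝ := max K₁ K₂ with hK
  have hK0 : 0 < K := lt_max_of_lt_left hK₁0
  refine ⟨2 * (2:ℝ) ^ p * K, by positivity, ?_⟩
  intro T hT y
  set D : ℝ := 1 + ‖y‖ ^ p with hD
  have hD0 : 0 < D := by
    have : 0 ≤ ‖y‖ ^ p := Real.rpow_nonneg (norm_nonneg _) p
    linarith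
  set c : ℝ := (2:ℝ) ^ p / D * (K₁ * T ^ (p'/2) + K₂ * T ^ ((p'+p)/2)) * (2 * Real.pi * T)⁻¹ with hc
  have hc0 : 0 ≤ c := by positivity
  set g : EuclideanSpace ℝ (Fin 2) → ℝ := fun x => c * Real.exp (-(1/(4*T)) * ‖x‖ ^ 2) with hg
  have hgint : Integrable g := (aux_integrable_gauss (show (0:ℝ) < 1/(4*T) by positivity)).const_mul c
  have hfg : ∀ x : EuclideanSpace ℝ (Fin 2),
      ‖x‖ ^ p' * heatK T x / (1 + ‖y - x‖ ^ p) ≤ g x := by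
    intro x
    have hdx : 0 < 1 + ‖y - x‖ ^ p := by
      have : 0 ≤ ‖y - x‖ ^ p := Real.rpow_nonneg (norm_nonneg _) p
      linarith
    have hxp : 0 ≤ ‖x‖ ^ p' := Real.rpow_nonneg (norm_nonneg _) p'
    have hheat : 0 ≤ heatK T x := by
      unfold heatK; positivity
    -- step 1: 1/(1+‖y-x‖^p) ≤ 2^p (1+‖x‖^p)/D
    have hw : (1 + ‖y - x‖ ^ p)⁻¹ ≤ (2:ℝ) ^ p * (1 + ‖x‖ ^ p) / D := by
      rw [inv_le_iff_one_le_mul₀ hdx] at *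
      rw [div_mul_eq_mul_div, le_div_iff₀ hD0, one_mul]
      calc D ≤ (2:ℝ) ^ p * (1 + ‖y - x‖ ^ p) * (1 + ‖x‖ ^ p) := aux_weight p hp y x
        _ = (2:ℝ) ^ p * (1 + ‖x‖ ^ p) * (1 + ‖y - x‖ ^ p) := by ring
    have step1 : ‖x‖ ^ p' * heatK T x / (1 + ‖y - x‖ ^ p)
        ≤ (2:ℝ) ^ p / D * ((‖x‖ ^ p' + ‖x‖ ^ (p' + p)) * heatK T x) := by
      rw [div_eq_mul_inv]
      calc ‖x‖ ^ p' * heatK T x * (1 + ‖y - x‖ ^ p)⁻¹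
          ≤ ‖x‖ ^ p' * heatK T x * ((2:ℝ) ^ p * (1 + ‖x‖ ^ p) / D) :=
            mul_le_mul_of_nonneg_left hw (by positivity)
        _ = (2:ℝ) ^ p / D * ((‖x‖ ^ p' * (1 + ‖x‖ ^ p)) * heatK T x) := by ring
        _ = (2:ℝ) ^ p / D * ((‖x‖ ^ p' + ‖x‖ ^ (p' + p)) * heatK T x) := by
            rw [Real.rpow_add_of_nonneg (norm_nonneg x) hp' hp]; ring
    have step2 : (‖x‖ ^ p' + ‖x‖ ^ (p' + p)) * heatK T x
        ≤ (K₁ * T ^ (p'/2) + K₂ * T ^ ((p'+p)/2)) * ((2 * Real.pi * T)⁻¹ * Real.exp (-(1/(4*T)) * ‖x‖ ^ 2)) := by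
      unfold heatK
      have hm1 := aux_moment p' T hp' hT x
      have hm2 := aux_moment (p'+p) T (by linarith) hT x
      have hexp : Real.exp (-(‖x‖ ^ 2) / (4 * T)) = Real.exp (-(1/(4*T)) * ‖x‖ ^ 2) := by
        congr 1; field_simp
      rw [hexp] at hm1 hm2
      have hpos : (0:ℝ) < (2 * Real.pi * T)⁻¹ := by positivity
      calc (‖x‖ ^ p' + ‖x‖ ^ (p' + p)) * ((2 * Real.pi * T)⁻¹ * Real.exp (-‖x‖ ^ 2 / (2 * T)))
          = (2 * Real.pi * T)⁻¹ * (‖x‖ ^ p' * Real.exp (-‖x‖ ^ 2 / (2 * T))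
              + ‖x‖ ^ (p'+p) * Real.exp (-‖x‖ ^ 2 / (2 * T))) := by ring
        _ ≤ (2 * Real.pi * T)⁻¹ * (K₁ * T ^ (p'/2) * Real.exp (-(1/(4*T)) * ‖x‖ ^ 2)
              + K₂ * T ^ ((p'+p)/2) * Real.exp (-(1/(4*T)) * ‖x‖ ^ 2)) := by
            apply mul_le_mul_of_nonneg_left _ hpos.le
            have e1 : K₁ * T ^ (p'/2) * Real.exp (-(1/(4*T)) * ‖x‖ ^ 2)
                = (8:ℝ) ^ (p'/2) * Nat.factorial (Nat.ceil (p'/2)) * T ^ (p'/2) * Real.exp (-(1/(4*T)) * ‖x‖ ^ 2) := by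
              rw [hK₁]
            have e2 : K₂ * T ^ ((p'+p)/2) * Real.exp (-(1/(4*T)) * ‖x‖ ^ 2)
                = (8:ℝ) ^ ((p'+p)/2) * Nat.factorial (Nat.ceil ((p'+p)/2)) * T ^ ((p'+p)/2) * Real.exp (-(1/(4*T)) * ‖x‖ ^ 2) := by
              rw [hK₂]
            rw [e1, e2]
            exact add_le_add hm1 hm2
        _ = (K₁ * T ^ (p'/2) + K₂ * T ^ ((p'+p)/2)) * ((2 * Real.pi * T)⁻¹ * Real.exp (-(1/(4*T)) * ‖x‖ ^ 2)) := by
            ring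
    calc ‖x‖ ^ p' * heatK T x / (1 + ‖y - x‖ ^ p)
        ≤ (2:ℝ) ^ p / D * ((‖x‖ ^ p' + ‖x‖ ^ (p' + p)) * heatK T x) := step1
      _ ≤ (2:ℝ) ^ p / D * ((K₁ * T ^ (p'/2) + K₂ * T ^ ((p'+p)/2)) *
            ((2 * Real.pi * T)⁻¹ * Real.exp (-(1/(4*T)) * ‖x‖ ^ 2))) :=
          mul_le_mul_of_nonneg_left step2 (by positivity)
      _ = g x := by rw [hg, hc]; ring
  have hmono : (∫ x' : EuclideanSpace ℝ (Fin 2),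
      ‖x'‖ ^ p' * heatK T x' / (1 + ‖y - x'‖ ^ p)) ≤ ∫ x, g x := by
    apply integral_mono_of_nonneg
    · filter_upwards with x
      have : 0 ≤ heatK T x := by unfold heatK; positivity
      have h1 : 0 ≤ ‖x‖ ^ p' := Real.rpow_nonneg (norm_nonneg _) p'
      have h2 : 0 < 1 + ‖y - x‖ ^ p := by
        have : 0 ≤ ‖y - x‖ ^ p := Real.rpow_nonneg (norm_nonneg _) p
        linarith
      positivity
    · exact hgint
    · filter_upwards with x using hfg x
  have hgval : ∫ x, g x = c * (4 * Real.pi * T) := by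
    rw [hg, MeasureTheory.integral_const_mul, aux_integral_gauss hT]
  rw [hgval] at hmono
  refine le_trans hmono ?_
  have hpi : 0 < Real.pi := Real.pi_pos
  have hval : c * (4 * Real.pi * T) = (2:ℝ) ^ p * 2 * (K₁ * T ^ (p'/2) + K₂ * T ^ ((p'+p)/2)) / D := by
    rw [hc]; field_simp; ring
  rw [hval]
  rw [div_le_div_iff₀ hD0 hD0]
  have hsum : K₁ * T ^ (p'/2) + K₂ * T ^ ((p'+p)/2) ≤ K * (T ^ (p'/2) + T ^ ((p'+p)/2)) := by
    have h1 : K₁ ≤ K := le_max_left _ _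
    have h2 : K₂ ≤ K := le_max_right _ _
    have t1 : 0 ≤ T ^ (p'/2) := Real.rpow_nonneg hT.le _
    have t2 : 0 ≤ T ^ ((p'+p)/2) := Real.rpow_nonneg hT.le _
    nlinarith
  have h2p : (0:ℝ) < (2:ℝ) ^ p := Real.rpow_pos_of_pos (by norm_num) p
  calc (2:ℝ) ^ p * 2 * (K₁ * T ^ (p'/2) + K₂ * T ^ ((p'+p)/2)) * D
      ≤ (2:ℝ) ^ p * 2 * (K * (T ^ (p'/2) + T ^ ((p'+p)/2))) * D := by
        apply mul_le_mul_of_nonneg_right _ hD0.le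
        exact mul_le_mul_of_nonneg_left hsum (by positivity)
    _ = 2 * (2:ℝ) ^ p * K * (T ^ (p'/2) + T ^ ((p'+p)/2)) * D := by ring
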